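/- arXiv:1711.09765 — 2 statements merged into one kernel-verified Lean document; each statement's English description precedes it below -/
import Mathlib

section
/- Fix n ≥ 2 and define the 2^n × 2^n complex matrix S_n := fromBlocks (I_{2^{n-2}} ⊗ P₀) (I_{2^{n-2}} ⊗ L₁) (I_{2^{n-2}} ⊗ L₀) (I_{2^{n-2}} ⊗ P₁), where the Kronecker factors I_{2^{n-2}} are identity matrices of size 2^{n-2}. Then for all x₁, xₙ ∈ ℂ² and all w ∈ ℂ^{2^{n-2}}, S_n applied to the Kronecker product x₁ ⊗ w ⊗ xₙ equals xₙ ⊗ w ⊗ x₁. -/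
open Matrix Kronecker

noncomputable def P0 : Matrix (Fin 2) (Fin 2) ℂ := Matrix.single 0 0 1
noncomputable def P1 : Matrix (Fin 2) (Fin 2) ℂ := Matrix.single 1 1 1
noncomputable def L0 : Matrix (Fin 2) (Fin 2) ℂ := Matrix.single 0 1 1
noncomputable def L1 : Matrix (Fin 2) (Fin 2) ℂ := Matrix.single 1 0 1

/-- Kronecker product of vectors: `(x ⊗ y)_{(i,j)} = x i * y j`. -/
def vecKron {α β : Type*} (x : α → ℂ) (y : β → ℂ) : α × β → ℂ := fun p => x p.1 * y p.2

/-- The canonical identification of `Fin 2 × α` with `α ⊕ α` (splitting according to the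
first qubit). -/
def qSplit {α : Type*} (p : Fin 2 × α) : α ⊕ α :=
  if p.1 = 0 then Sum.inl p.2 else Sum.inr p.2

/-- `S_n := fromBlocks (I_{2^{n-2}} ⊗ P₀) (I_{2^{n-2}} ⊗ L₁) (I_{2^{n-2}} ⊗ L₀) (I_{2^{n-2}} ⊗ P₁)`
maps `x₁ ⊗ w ⊗ xₙ` to `xₙ ⊗ w ⊗ x₁` : it swaps the first and last qubit of an `n`-qubit state. -/
theorem swapFirstLast_mulVec (n : ℕ) (hn : 2 ≤ n) (x₁ xₙ : Fin 2 → ℂ)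
    (w : Fin (2 ^ (n - 2)) → ℂ) :
    ((Matrix.fromBlocks
          ((1 : Matrix (Fin (2 ^ (n - 2))) (Fin (2 ^ (n - 2))) ℂ) ⊗ₖ P0)
          ((1 : Matrix (Fin (2 ^ (n - 2))) (Fin (2 ^ (n - 2))) ℂ) ⊗ₖ L1)
          ((1 : Matrix (Fin (2 ^ (n - 2))) (Fin (2 ^ (n - 2))) ℂ) ⊗ₖ L0)
          ((1 : Matrix (Fin (2 ^ (n - 2))) (Fin (2 ^ (n - 2))) ℂ) ⊗ₖ P1)).submatrix
        qSplit qSplit).mulVec (vecKron x₁ (vecKron w xₙ)) =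
      vecKron xₙ (vecKron w x₁) := by
  funext ⟨a, i, b⟩
  simp only [mulVec, dotProduct, submatrix_apply, vecKron, qSplit]
  rw [Fintype.sum_prod_type]
  simp only [Fin.sum_univ_two, Fintype.sum_prod_type, Fin.sum_univ_two]
  fin_cases a <;> fin_cases b <;>
    simp [P0, P1, L0, L1, fromBlocks, kroneckerMap_apply, one_apply,
      Matrix.single, Finset.mul_sum, Finset.sum_ite_eq', mul_comm, mul_left_comm] <;> ring
end

section
/- Fix k, m, n with n ≥ 1 and m + n ≤ k, and define SWAP_{(k;m,m+n)} := I_{2^{m-1}} ⊗ S_{n+1} ⊗ I_{2^{k-m-n}}, where S_{n+1} := fromBlocks (I_{2^{n-1}} ⊗ P₀) (I_{2^{n-1}} ⊗ L₁) (I_{2^{n-1}} ⊗ L₀) (I_{2^{n-1}} ⊗ P₁). Then for all a ∈ ℂ^{2^{m-1}}, x, y ∈ ℂ², w ∈ ℂ^{2^{n-1}}, b ∈ ℂ^{2^{k-m-n}}, SWAP_{(k;m,m+n)} applied to a ⊗ x ⊗ w ⊗ y ⊗ b equals a ⊗ y ⊗ w ⊗ x ⊗ b; i.e. it swaps the m-th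 and (m+n)-th qubits of a k-qubit state. -/
open Matrix Kronecker

/-- `S_{n+1}`, the swap of the first and last of `n+1` qubits, viewed as a matrix on the
tensor-product index set `Fin 2 × (Fin (2^{n-1}) × Fin 2)`. -/
noncomputable def Ssw (n : ℕ) :
    Matrix (Fin 2 × (Fin (2 ^ (n - 1)) × Fin 2)) (Fin 2 × (Fin (2 ^ (n - 1)) × Fin 2)) ℂ :=
  (Matrix.fromBlocks
      ((1 : Matrix (Fin (2 ^ (n - 1))) (Fin (2 ^ (n - 1))) ℂ) ⊗ₖ P0)
      ((1 : Matrix (Fin (2 ^ (n - 1))) (Fin (2 ^ (n - 1))) ℂ) ⊗ₖ L1)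
      ((1 : Matrix (Fin (2 ^ (n - 1))) (Fin (2 ^ (n - 1))) ℂ) ⊗ₖ L0)
      ((1 : Matrix (Fin (2 ^ (n - 1))) (Fin (2 ^ (n - 1))) ℂ) ⊗ₖ P1)).submatrix qSplit qSplit

lemma kron_mulVec {α β α' β' : Type*} [Fintype α'] [Fintype β'] [DecidableEq α'] [DecidableEq β']
    (A : Matrix α α' ℂ) (B : Matrix β β' ℂ) (u : α' → ℂ) (v : β' → ℂ) :
    (A ⊗ₖ B).mulVec (vecKron u v) = vecKron (A.mulVec u) (B.mulVec v) := by
  funext ⟨i, j⟩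
  simp [mulVec, dotProduct, vecKron, Fintype.sum_prod_type, Finset.mul_sum, Finset.sum_mul]
  rw [Finset.sum_comm]
  exact Finset.sum_congr rfl fun _ _ => Finset.sum_congr rfl fun _ _ => by ring

lemma Ssw_mulVec (n : ℕ) (x y : Fin 2 → ℂ) (w : Fin (2 ^ (n - 1)) → ℂ) :
    (Ssw n).mulVec (vecKron x (vecKron w y)) = vecKron y (vecKron w x) := by
  funext ⟨i, p, j⟩
  fin_cases i <;> fin_cases j <;>
    simp [Ssw, mulVec, dotProduct, Fintype.sum_prod_type, Fin.sum_univ_two, qSplit, vecKron,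
      P0, P1, L0, L1, Matrix.one_apply, Matrix.single, Finset.mul_sum,
      Finset.sum_ite_eq'] <;> ring

/-- `SWAP_{(k;m,m+n)} = I_{2^{m-1}} ⊗ S_{n+1} ⊗ I_{2^{k-m-n}}` swaps the `m`-th and the
`(m+n)`-th qubits of a `k`-qubit state: it maps `a ⊗ x ⊗ w ⊗ y ⊗ b` to `a ⊗ y ⊗ w ⊗ x ⊗ b`. -/
theorem swap_km_mn_mulVec (k m n : ℕ) (hm : 1 ≤ m) (hn : 1 ≤ n) (hk : m + n ≤ k)
    (a : Fin (2 ^ (m - 1)) → ℂ) (x y : Fin 2 → ℂ) (w : Fin (2 ^ (n - 1)) → ℂ)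
    (b : Fin (2 ^ (k - m - n)) → ℂ) :
    (((1 : Matrix (Fin (2 ^ (m - 1))) (Fin (2 ^ (m - 1))) ℂ) ⊗ₖ Ssw n ⊗ₖ
          (1 : Matrix (Fin (2 ^ (k - m - n))) (Fin (2 ^ (k - m - n))) ℂ)).mulVec
        (vecKron (vecKron a (vecKron x (vecKron w y))) b)) =
      vecKron (vecKron a (vecKron y (vecKron w x))) b := by
  rw [kron_mulVec, kron_mulVec, Ssw_mulVec, Matrix.one_mulVec, Matrix.one_mulVec]
end
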